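/- Let (X, d) be a finite nonempty metric space. Let P assign to each x ∈ X a probability distribution P(·|x) on X, let r : X → ℝ, let J ∈ ℝ, and let V : X → ℝ satisfy the Bellman equation V(x) = r(x) − J + ∑_{z∈X} P(z|x) V(z) for all x ∈ X. Suppose r is L_r-Lipschitz and the kernel is L_p-Lipschitz in Kantorovich distance, i.e., K(P(·|x), P(·|y)) ≤ L_p · d(x, y) for all x, y ∈ X, with L_p < 1. Then V is Lipschitz with constant L_r/(1 − L_p), i.e., |V(x) − V(y)| ≤ (L_r/(1 − L_p)) · d(x, y) for all x, y ∈ X. -/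

import Mathlib

/-- The Kantorovich distance between two probability distributions `γ`, `ζ` on a
finite metric space `X`: the supremum, over 1-Lipschitz functions `g : X → ℝ`,
of `|∑_x g(x)γ(x) − ∑_x g(x)ζ(x)|`. -/
noncomputable def kantorovich {X : Type*} [MetricSpace X] [Fintype X]
    (γ ζ : X → ℝ) : ℝ :=
  sSup { r : ℝ | ∃ g : X → ℝ, (∀ x y, |g x - g y| ≤ dist x y) ∧
    r = |(∑ x, g x * γ x) - ∑ x, g x * ζ x| }

lemma aux_le_kantorovich {X : Type*} [MetricSpace X] [Fintype X] [Nonempty X]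
    (γ ζ : X → ℝ) (hγ0 : ∀ z, 0 ≤ γ z) (hγ1 : ∑ z, γ z = 1)
    (hζ0 : ∀ z, 0 ≤ ζ z) (hζ1 : ∑ z, ζ z = 1)
    (g : X → ℝ) (hg : ∀ x y, |g x - g y| ≤ dist x y) :
    |(∑ x, g x * γ x) - ∑ x, g x * ζ x| ≤ kantorovich γ ζ := by
  obtain ⟨x0⟩ := ‹Nonempty X›
  apply le_csSup
  · refine ⟨2 * ∑ z, dist z x0, ?_⟩
    rintro s ⟨f, hf, rfl⟩
    have key : ∑ z, f z * γ z - ∑ z, f z * ζ z = ∑ z, (f z - f x0) * (γ z - ζ z) := by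
      have h : ∀ z : X, (f z - f x0) * (γ z - ζ z)
          = f z * γ z - f z * ζ z - (f x0 * γ z - f x0 * ζ z) := by intro z; ring
      simp_rw [h, Finset.sum_sub_distrib, ← Finset.mul_sum, hγ1, hζ1]
      ring
    rw [key]
    calc |∑ z, (f z - f x0) * (γ z - ζ z)| ≤ ∑ z, |(f z - f x0) * (γ z - ζ z)| :=
          Finset.abs_sum_le_sum_abs _ _
      _ ≤ ∑ z, dist z x0 * 2 := by
          apply Finset.sum_le_sum
          intro z _
          rw [abs_mul]
          have h1 : |f z - f x0| ≤ dist z x0 := hf z x0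
          have h2 : |γ z - ζ z| ≤ 2 := by
            have hγle : γ z ≤ 1 := by
              rw [← hγ1]
              exact Finset.single_le_sum (fun i _ => hγ0 i) (Finset.mem_univ z)
            have hζle : ζ z ≤ 1 := by
              rw [← hζ1]
              exact Finset.single_le_sum (fun i _ => hζ0 i) (Finset.mem_univ z)
            rw [abs_le]
            constructor <;> nlinarith [hγ0 z, hζ0 z]
          exact mul_le_mul h1 h2 (abs_nonneg _) dist_nonneg
      _ = 2 * ∑ z, dist z x0 := by rw [← Finset.sum_mul]; ring
  · exact ⟨g, hg, rfl⟩

theorem stmt14 {X : Type*} [MetricSpace X] [Fintype X] [Nonempty X]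
    (P : X → X → ℝ)
    (hP0 : ∀ x z, 0 ≤ P x z) (hP1 : ∀ x, ∑ z, P x z = 1)
    (r : X → ℝ) (J : ℝ) (V : X → ℝ)
    (hBellman : ∀ x, V x = r x - J + ∑ z, P x z * V z)
    (Lr Lp : ℝ) (hLr : 0 ≤ Lr) (hLp0 : 0 ≤ Lp) (hLp : Lp < 1)
    (hr : ∀ x y, |r x - r y| ≤ Lr * dist x y)
    (hP : ∀ x y, kantorovich (P x) (P y) ≤ Lp * dist x y) :
    ∀ x y, |V x - V y| ≤ (Lr / (1 - Lp)) * dist x y := by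
  classical
  have h1Lp : 0 < 1 - Lp := by linarith
  have hC : 0 ≤ Lr / (1 - Lp) := div_nonneg hLr (le_of_lt h1Lp)
  -- define the Lipschitz constant of V
  set f : X × X → ℝ := fun p => if p.1 = p.2 then 0 else |V p.1 - V p.2| / dist p.1 p.2 with hf
  set L : ℝ := Finset.sup' Finset.univ (Finset.univ_nonempty) f with hLdef
  have hf0 : ∀ p : X × X, 0 ≤ f p := by
    intro p
    by_cases h : p.1 = p.2
    · simp [hf, h]
    · simp only [hf, if_neg h]
      exact div_nonneg (abs_nonneg _) dist_nonneg
  have hL0 : 0 ≤ L := le_trans (hf0 _) (Finset.le_sup' f (Finset.mem_univ (Classical.arbitrary (X × X))))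
  have hVLip : ∀ x y, |V x - V y| ≤ L * dist x y := by
    intro x y
    by_cases h : x = y
    · simp [h]
    · have hd : 0 < dist x y := dist_pos.mpr h
      have : f (x, y) ≤ L := Finset.le_sup' f (Finset.mem_univ (x, y))
      simp only [hf, if_neg h] at this
      rw [div_le_iff₀ hd] at this
      linarith [this]
  -- key: |V x - V y| ≤ Lr * d + L * Lp * d
  have hKey : ∀ x y, |V x - V y| ≤ Lr * dist x y + L * Lp * dist x y := by
    intro x y
    have hBell : V x - V y = (r x - r y) + ((∑ z, V z * P x z) - ∑ z, V z * P y z) := by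
      rw [hBellman x, hBellman y]
      simp_rw [mul_comm]
      ring
    by_cases hL : L = 0
    · have := hVLip x y
      rw [hL, zero_mul] at this
      have h0 : |V x - V y| = 0 := le_antisymm this (abs_nonneg _)
      rw [h0]
      positivity
    · have hLpos : 0 < L := lt_of_le_of_ne hL0 (Ne.symm hL)
      have hgLip : ∀ a b, |(fun z => V z / L) a - (fun z => V z / L) b| ≤ dist a b := by
        intro a b
        simp only
        rw [div_sub_div_same, abs_div, abs_of_pos hLpos, div_le_iff₀ hLpos, mul_comm]
        exact hVLip a b
      have hsum := aux_le_kantorovich (P x) (P y) (hP0 x) (hP1 x) (hP0 y) (hP1 y)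
        (fun z => V z / L) hgLip
      have hsum2 : |(∑ z, V z / L * P x z) - ∑ z, V z / L * P y z| ≤ Lp * dist x y :=
        le_trans hsum (hP x y)
      have heq : (∑ z, V z / L * P x z) - ∑ z, V z / L * P y z
          = ((∑ z, V z * P x z) - ∑ z, V z * P y z) / L := by
        rw [sub_div, Finset.sum_div, Finset.sum_div]
        congr 1 <;> · apply Finset.sum_congr rfl; intro z _; ring
      rw [heq, abs_div, abs_of_pos hLpos, div_le_iff₀ hLpos] at hsum2
      rw [hBell]
      calc |(r x - r y) + ((∑ z, V z * P x z) - ∑ z, V z * P y z)|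
          ≤ |r x - r y| + |(∑ z, V z * P x z) - ∑ z, V z * P y z| := abs_add_le _ _
        _ ≤ Lr * dist x y + L * Lp * dist x y := by
            apply add_le_add (hr x y)
            calc |(∑ z, V z * P x z) - ∑ z, V z * P y z| ≤ Lp * dist x y * L := hsum2
              _ = L * Lp * dist x y := by ring
  -- conclude L ≤ Lr / (1 - Lp)
  have hLle : L ≤ Lr / (1 - Lp) := by
    obtain ⟨p, _, hp⟩ := Finset.exists_mem_eq_sup' (Finset.univ_nonempty (α := X × X)) f
    have hLfp : L = f p := hp
    by_cases h : p.1 = p.2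
    · have : L = 0 := by rw [hLfp, hf]; simp [h]
      rw [this]; exact hC
    · have hd : 0 < dist p.1 p.2 := dist_pos.mpr h
      have hLeq : L * dist p.1 p.2 = |V p.1 - V p.2| := by
        rw [hLfp]
        simp only [hf, if_neg h]
        field_simp
      have := hKey p.1 p.2
      rw [← hLeq] at this
      have hL1 : L * (1 - Lp) ≤ Lr := by
        have := (mul_le_mul_iff_of_pos_right hd).mp (by linarith : L * (1 - Lp) * dist p.1 p.2 ≤ Lr * dist p.1 p.2)
        exact this
      rw [le_div_iff₀ h1Lp]
      exact hL1
  intro x y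
  calc |V x - V y| ≤ L * dist x y := hVLip x y
    _ ≤ (Lr / (1 - Lp)) * dist x y := mul_le_mul_of_nonneg_right hLle dist_nonneg
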